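/- Define f : [0,1] → 2^[0,1] by f(x) = {x/3} for 0 ≤ x < 1/2 and f(x) = {x/3, 2x−1} for 1/2 ≤ x ≤ 1. Then f is upper semicontinuous but does not have the weak intermediate value property. -/

import Mathlib

open Set Filter Topology

/-- The graph of a set-valued function on `[0,1]`. -/
def GraphSV (f : ℝ → Set ℝ) : Set (ℝ × ℝ) :=
  {p | p.1 ∈ Icc (0:ℝ) 1 ∧ p.2 ∈ f p.1}

/-- Upper semicontinuous set-valued function `[0,1] → 2^[0,1]`:
nonempty compact values inside `[0,1]` and closed graph. -/
def USC (f : ℝ → Set ℝ) : Prop :=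
  (∀ x ∈ Icc (0:ℝ) 1, (f x).Nonempty ∧ f x ⊆ Icc (0:ℝ) 1 ∧ IsCompact (f x)) ∧
    IsClosed (GraphSV f)

/-- The intermediate value property. -/
def IVP (f : ℝ → Set ℝ) : Prop :=
  ∀ x₁ ∈ Icc (0:ℝ) 1, ∀ x₂ ∈ Icc (0:ℝ) 1, x₁ ≠ x₂ →
    ∀ y₁ ∈ f x₁, ∀ y₂ ∈ f x₂, y₁ ≠ y₂ →
      ∀ y ∈ Ioo (min y₁ y₂) (max y₁ y₂),
        ∃ x ∈ Ioo (min x₁ x₂) (max x₁ x₂), y ∈ f x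

/-- The weak intermediate value property. -/
def WIVP (f : ℝ → Set ℝ) : Prop :=
  ∀ x₁ ∈ Icc (0:ℝ) 1, ∀ x₂ ∈ Icc (0:ℝ) 1, x₁ ≠ x₂ →
    ∀ y₁ ∈ f x₁, ∃ y₂ ∈ f x₂,
      ∀ y ∈ Icc (min y₁ y₂) (max y₁ y₂),
        ∃ x ∈ Icc (min x₁ x₂) (max x₁ x₂), y ∈ f x

/-- Weak continuity (from the left and the right) at each interior point. -/
def WeakCont (f : ℝ → Set ℝ) : Prop :=
  ∀ x ∈ Ioo (0:ℝ) 1, ∀ y ∈ f x,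
    (∃ u : ℕ → ℝ × ℝ, (∀ k, u k ∈ GraphSV f ∧ (u k).1 < x) ∧
      Tendsto u atTop (𝓝 (x, y))) ∧
    (∃ u : ℕ → ℝ × ℝ, (∀ k, u k ∈ GraphSV f ∧ x < (u k).1) ∧
      Tendsto u atTop (𝓝 (x, y)))

/-- `f` is almost nonfissile: the nonfissile points of the graph are dense in the graph. -/
def AlmostNonfissile (f : ℝ → Set ℝ) : Prop :=
  GraphSV f ⊆ closure {p | p ∈ GraphSV f ∧ f p.1 = {p.2}}

/-- `f` is light: each fiber `{x : y ∈ f x}` has empty interior in `[0,1]`. -/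
def Light (f : ℝ → Set ℝ) : Prop :=
  ∀ y : ℝ, ∀ U : Set ℝ, IsOpen U → (U ∩ Icc (0:ℝ) 1).Nonempty →
    ∃ x ∈ U ∩ Icc (0:ℝ) 1, y ∉ f x

/-- `f` is surjective onto `[0,1]`. -/
def Surj (f : ℝ → Set ℝ) : Prop :=
  ∀ y ∈ Icc (0:ℝ) 1, ∃ x ∈ Icc (0:ℝ) 1, y ∈ f x

/-- The `n`-fold set-valued composition of `f`. -/
def fIter (f : ℝ → Set ℝ) : ℕ → ℝ → Set ℝ
  | 0, x => {x}
  | n + 1, x => ⋃ z ∈ fIter f n x, f z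

/-- The image `f^n[A] = ⋃_{a ∈ A} f^n(a)`. -/
def imIter (f : ℝ → Set ℝ) (n : ℕ) (A : Set ℝ) : Set ℝ :=
  ⋃ a ∈ A, fIter f n a

/-- The inverse limit of the single bonding function `f` on `[0,1]`. -/
def InvLim (f : ℝ → Set ℝ) : Set (ℕ → ℝ) :=
  {z | (∀ i, z i ∈ Icc (0:ℝ) 1) ∧ ∀ i, z i ∈ f (z (i + 1))}

/-- `X` is irreducible between `x` and `y`: the only subcontinuum of `X`
containing both is `X` itself. -/
def IrreducibleBetween (X : Set (ℕ → ℝ)) (x y : ℕ → ℝ) : Prop :=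
  x ∈ X ∧ y ∈ X ∧
    ∀ K ⊆ X, IsCompact K → IsConnected K → x ∈ K → y ∈ K → K = X

/-- the given map is usc but lacks the weak IVP. -/
theorem stmt11 :
    USC (fun x => if x < (1:ℝ)/2 then ({x/3} : Set ℝ) else ({x/3, 2*x - 1} : Set ℝ)) ∧
      ¬ WIVP (fun x => if x < (1:ℝ)/2 then ({x/3} : Set ℝ) else ({x/3, 2*x - 1} : Set ℝ)) := by
  set f : ℝ → Set ℝ := fun x => if x < (1:ℝ)/2 then ({x/3} : Set ℝ) else ({x/3, 2*x - 1} : Set ℝ) with hf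
  have hfx : ∀ x : ℝ, f x = if x < (1:ℝ)/2 then ({x/3} : Set ℝ) else ({x/3, 2*x - 1} : Set ℝ) :=
    fun x => rfl
  constructor
  · constructor
    · intro x hx
      obtain ⟨hx0, hx1⟩ := hx
      refine ⟨⟨x/3, ?_⟩, ?_, ?_⟩
      · rw [hfx]; by_cases h : x < (1:ℝ)/2
        · rw [if_pos h]; exact rfl
        · rw [if_neg h]; exact Or.inl rfl
      · intro y hy
        rw [hfx] at hy
        by_cases h : x < (1:ℝ)/2
        · rw [if_pos h] at hy
          rw [mem_singleton_iff] at hy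
          subst hy; constructor <;> nlinarith
        · rw [if_neg h] at hy
          push_neg at h
          simp only [mem_insert_iff, mem_singleton_iff] at hy
          rcases hy with hy | hy <;> subst hy <;> constructor <;> nlinarith
      · rw [hfx]; by_cases h : x < (1:ℝ)/2
        · rw [if_pos h]; exact isCompact_singleton
        · rw [if_neg h]; exact isCompact_singleton.insert _
    · have hG : GraphSV f = {p : ℝ × ℝ | p.1 ∈ Icc (0:ℝ) 1 ∧ p.2 = p.1/3} ∪
          {p : ℝ × ℝ | p.1 ∈ Icc ((1:ℝ)/2) 1 ∧ p.2 = 2*p.1 - 1} := by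
        ext ⟨x, y⟩
        simp only [GraphSV, mem_setOf_eq, mem_union, hfx]
        by_cases h : x < (1:ℝ)/2
        · rw [if_pos h]
          simp only [mem_singleton_iff]
          constructor
          · rintro ⟨hx, hy⟩; exact Or.inl ⟨hx, hy⟩
          · rintro (⟨hx, hy⟩ | ⟨hx, hy⟩)
            · exact ⟨hx, hy⟩
            · exact absurd hx.1 (by linarith)
        · rw [if_neg h]
          simp only [mem_insert_iff, mem_singleton_iff]
          push_neg at h
          constructor
          · rintro ⟨hx, hy | hy⟩
            · exact Or.inl ⟨hx, hy⟩
            · exact Or.inr ⟨⟨h, hx.2⟩, hy⟩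
          · rintro (⟨hx, hy⟩ | ⟨hx, hy⟩)
            · exact ⟨hx, Or.inl hy⟩
            · exact ⟨⟨by linarith [hx.1], hx.2⟩, Or.inr hy⟩
      rw [hG]
      apply IsClosed.union
      · exact (isClosed_Icc.preimage continuous_fst).inter
          (isClosed_eq continuous_snd (continuous_fst.div_const 3))
      · exact (isClosed_Icc.preimage continuous_fst).inter
          (isClosed_eq continuous_snd (by continuity))
  · intro hW
    have hy1 : (0:ℝ) ∈ f (1/2) := by
      rw [hfx, if_neg (lt_irrefl _)]
      right; rw [mem_singleton_iff]; norm_num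
    obtain ⟨y₂, hy₂, hcov⟩ := hW (1/2) (by norm_num) (3/10) (by norm_num)
      (by norm_num) 0 hy1
    rw [hfx, if_pos (by norm_num : (3:ℝ)/10 < 1/2), mem_singleton_iff] at hy₂
    subst hy₂
    obtain ⟨x, hx, hyx⟩ := hcov (1/20)
      (by rw [show min (0:ℝ) (3/10/3) = 0 by norm_num,
              show max (0:ℝ) (3/10/3) = 1/10 by norm_num]; constructor <;> norm_num)
    rw [show min ((1:ℝ)/2) (3/10) = 3/10 by norm_num,
        show max ((1:ℝ)/2) (3/10) = 1/2 by norm_num] at hx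
    obtain ⟨hxl, hxr⟩ := hx
    rw [hfx] at hyx
    by_cases h : x < (1:ℝ)/2
    · rw [if_pos h, mem_singleton_iff] at hyx
      linarith
    · rw [if_neg h] at hyx
      push_neg at h
      simp only [mem_insert_iff, mem_singleton_iff] at hyx
      rcases hyx with hyx | hyx <;> linarith
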